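/- (Nguyen–Wainwright–Jordan) For probability measures P ≪ Q and any bounded measurable T: D_KL(P‖Q) ≥ E_P[T] − E_Q[e^{T−1}], with equality when T = log(dP/dQ) + 1. -/

import Mathlib

open MeasureTheory Real

/-- KL divergence as `E_P[log (dP/dQ)]`. -/
noncomputable def klDiv {X : Type*} [MeasurableSpace X] (P Q : Measure X) : ℝ :=
  ∫ x, Real.log ((P.rnDeriv Q x).toReal) ∂P

lemma fenchel_young_aux (u t : ℝ) (hu : 0 ≤ u) :
    t * u - Real.exp (t - 1) ≤ u * Real.log u := by
  rcases eq_or_lt_of_le hu with h | h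
  · have := Real.exp_pos (t - 1)
    simp [← h]
    nlinarith
  · have h1 : (t - 1 - Real.log u) + 1 ≤ Real.exp (t - 1 - Real.log u) :=
      Real.add_one_le_exp _
    have h2 : Real.exp (t - 1 - Real.log u) * u = Real.exp (t - 1) := by
      rw [Real.exp_sub, Real.exp_log h]
      field_simp
    nlinarith

/-- Nguyen–Wainwright–Jordan: for any bounded measurable `T`,
`D_KL(P‖Q) ≥ E_P[T] − E_Q[e^{T−1}]`, with equality when `T = log(dP/dQ) + 1`. -/
theorem stmt10 {X : Type*} [MeasurableSpace X] (P Q : Measure X)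
    [IsProbabilityMeasure P] [IsProbabilityMeasure Q] (hPQ : P ≪ Q)
    (hpos : ∀ᵐ x ∂Q, 0 < (P.rnDeriv Q x).toReal)
    (hKL : Integrable (fun x => Real.log ((P.rnDeriv Q x).toReal)) P) :
    (∀ T : X → ℝ, Measurable T → (∃ C : ℝ, ∀ x, |T x| ≤ C) →
      (∫ x, T x ∂P) - (∫ x, Real.exp (T x - 1) ∂Q) ≤ klDiv P Q) ∧
    klDiv P Q =
      (∫ x, (Real.log ((P.rnDeriv Q x).toReal) + 1) ∂P) -
        ∫ x, Real.exp ((Real.log ((P.rnDeriv Q x).toReal) + 1) - 1) ∂Q := by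
  set f : X → ℝ := fun x => (P.rnDeriv Q x).toReal with hf
  constructor
  · rintro T hT ⟨C, hC⟩
    have hTint : Integrable T P :=
      (integrable_const C).mono' hT.aestronglyMeasurable (Filter.Eventually.of_forall hC)
    have hEint : Integrable (fun x => Real.exp (T x - 1)) Q := by
      refine (integrable_const (Real.exp (C - 1))).mono'
        ((hT.sub measurable_const).exp).aestronglyMeasurable
        (Filter.Eventually.of_forall fun x => ?_)
      rw [Real.norm_eq_abs, Real.abs_exp]
      exact Real.exp_le_exp.mpr (by have := (abs_le.mp (hC x)).2; linarith)
    have hT' : ∫ x, T x ∂P = ∫ x, f x • T x ∂Q :=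
      (integral_rnDeriv_smul hPQ).symm
    have hKL' : klDiv P Q = ∫ x, f x • Real.log (f x) ∂Q := by
      unfold klDiv
      exact (integral_rnDeriv_smul hPQ).symm
    have hfT : Integrable (fun x => f x • T x) Q :=
      (integrable_rnDeriv_smul_iff hPQ).mpr hTint
    have hflog : Integrable (fun x => f x • Real.log (f x)) Q :=
      (integrable_rnDeriv_smul_iff hPQ).mpr hKL
    rw [hT', hKL', sub_le_iff_le_add, ← integral_add hflog hEint]
    refine integral_mono_ae hfT (hflog.add hEint)
      (Filter.Eventually.of_forall fun x => ?_)
    have := fenchel_young_aux (f x) (T x) ENNReal.toReal_nonneg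
    simp only [smul_eq_mul]
    nlinarith
  · have h1 : ∫ x, (Real.log (f x) + 1) ∂P = klDiv P Q + 1 := by
      rw [integral_add hKL (integrable_const 1), integral_const]
      simp [klDiv]
    have h2 : ∫ x, Real.exp ((Real.log (f x) + 1) - 1) ∂Q = 1 := by
      have : ∀ᵐ x ∂Q, Real.exp ((Real.log (f x) + 1) - 1) = f x := by
        filter_upwards [hpos] with x hx
        simp [Real.exp_log (show 0 < f x from hx)]
      rw [integral_congr_ae this, Measure.integral_toReal_rnDeriv hPQ]
      simp
    rw [h1, h2]
    ring
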